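/- A graph G is paw-free if and only if every vertex subset S of G inducing a triangle-containing connected subgraph induces a complete multipartite graph; more precisely (Olariu's theorem): a graph is paw-free if and only if each of its connected components is triangle-free or complete multipartite. -/

import Mathlib

/-- The paw: a triangle `{0,1,2}` together with a pendant vertex `3` adjacent to `2`. -/
def paw : SimpleGraph (Fin 4) :=
  SimpleGraph.fromEdgeSet {s(0, 1), s(0, 2), s(1, 2), s(2, 3)}

/-- A graph is complete multipartite iff non-adjacency is transitive, i.e. the vertex set can
be partitioned so that two vertices are adjacent iff they lie in distinct parts. -/
def IsCompleteMultipartite {V : Type*} (G : SimpleGraph V) : Prop :=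
  ∀ u v w : V, ¬ G.Adj u v → ¬ G.Adj v w → ¬ G.Adj u w

section Aux
variable {V : Type*} {G : SimpleGraph V}

/-- From a paw configuration, build a paw embedding. -/
lemma noPaw (H : IsEmpty (paw ↪g G)) {a b c d : V} (hab : G.Adj a b) (hac : G.Adj a c)
    (hbc : G.Adj b c) (hcd : G.Adj c d) (had : ¬ G.Adj a d) (hbd : ¬ G.Adj b d) : False := by
  have hda : a ≠ d := fun h => hbd (h ▸ hab.symm)
  have hdb : b ≠ d := fun h => had (h ▸ hab)
  have hdc : c ≠ d := fun h => had (h ▸ hac)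
  refine H.elim ⟨⟨![a,b,c,d], ?_⟩, ?_⟩
  · intro i j hij
    fin_cases i <;> fin_cases j <;>
      simp_all [hab.ne, hac.ne, hbc.ne, hab.ne', hac.ne', hbc.ne']
  · intro i j
    change G.Adj (![a,b,c,d] i) (![a,b,c,d] j) ↔ paw.Adj i j
    fin_cases i <;> fin_cases j <;>
      simp [paw, SimpleGraph.fromEdgeSet_adj, hab, hac, hbc, hcd, had, hbd,
        hab.symm, hac.symm, hbc.symm, hcd.symm, G.irrefl] <;>
      first
        | exact fun h => had h.symm
        | exact fun h => hbd h.symm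

/-- being in a triangle -/
def InTri (G : SimpleGraph V) (x : V) : Prop := ∃ a b, G.Adj x a ∧ G.Adj x b ∧ G.Adj a b

lemma inTri_adj (H : IsEmpty (paw ↪g G)) {x y : V} (hx : InTri G x) (hxy : G.Adj x y) :
    InTri G y := by
  obtain ⟨a, b, hxa, hxb, hab⟩ := hx
  by_cases hay : G.Adj a y
  · exact ⟨a, x, hay.symm, hxy.symm, hxa.symm⟩
  by_cases hby : G.Adj b y
  · exact ⟨b, x, hby.symm, hxy.symm, hxb.symm⟩
  exact absurd (noPaw H hab hxa.symm hxb.symm hxy hay hby) not_false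

lemma inTri_reachable (H : IsEmpty (paw ↪g G)) {x y : V} (h : G.Reachable x y)
    (hx : InTri G x) : InTri G y := by
  obtain ⟨p⟩ := h
  induction p with
  | nil => exact hx
  | cons h p ih => exact ih (inTri_adj H hx h)

/-- every edge at a triangle vertex lies in a triangle -/
lemma edge_tri (H : IsEmpty (paw ↪g G)) {u w : V} (hu : InTri G u) (huw : G.Adj u w) :
    ∃ t, G.Adj t u ∧ G.Adj t w := by
  obtain ⟨a, b, hua, hub, hab⟩ := hu
  by_cases haw : G.Adj a w
  · exact ⟨a, hua.symm, haw⟩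
  by_cases hbw : G.Adj b w
  · exact ⟨b, hub.symm, hbw⟩
  exact absurd (noPaw H hab hua.symm hub.symm huw haw hbw) not_false

/-- core lemma, asymmetric version: m adjacent to u -/
lemma core' (H : IsEmpty (paw ↪g G)) {u w v m : V} (hu : InTri G u) (huw : G.Adj u w)
    (hvm : G.Adj v m) (hmu : G.Adj m u) (huv : ¬ G.Adj u v) (hwv : ¬ G.Adj w v) : False := by
  by_cases hmw : G.Adj m w
  · exact noPaw H huw hmu.symm hmw.symm hvm.symm huv hwv
  obtain ⟨t, htu, htw⟩ := edge_tri H hu huw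
  have hmt : G.Adj m t := by
    by_contra hmt
    exact noPaw H htw.symm huw.symm htu hmu.symm (fun h => hmw h.symm) (fun h => hmt h.symm)
  -- triangle m u t, v adjacent to m
  have hvt : G.Adj v t := by
    by_contra hvt
    exact noPaw H htu.symm hmu.symm hmt.symm hvm.symm huv (fun h => hvt h.symm)
  -- triangle u w t with pendant v at t
  exact noPaw H huw htu.symm htw.symm hvt.symm huv hwv

lemma core (H : IsEmpty (paw ↪g G)) {u w v m : V} (hu : InTri G u) (huw : G.Adj u w)
    (hvm : G.Adj v m) (hm : G.Adj m u ∨ G.Adj m w) (huv : ¬ G.Adj u v)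
    (hwv : ¬ G.Adj w v) : False := by
  rcases hm with hmu | hmw
  · exact core' H hu huw hvm hmu huv hwv
  · exact core' H (inTri_adj H hu huw) huw.symm hvm hmw hwv huv

lemma lemD (H : IsEmpty (paw ↪g G)) {w : V} :
    ∀ {u v : V} (_ : G.Walk v u), InTri G u → G.Adj u w → ¬ G.Adj u v → ¬ G.Adj w v → False := by
  intro u v p
  induction p with
  | nil => intro _ huw _ h2; exact h2 huw.symm
  | @cons x m u0 hvm q ih =>
      intro hu huw h1 h2
      by_cases hmu : G.Adj m u0
      · exact core H hu huw hvm (Or.inl hmu) h1 h2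
      by_cases hmw : G.Adj m w
      · exact core H hu huw hvm (Or.inr hmw) h1 h2
      exact ih hu huw (fun h => hmu h.symm) (fun h => hmw h.symm)

end Aux

/-- Olariu's theorem: a graph is paw-free iff each of its connected components is
triangle-free or complete multipartite. -/
theorem stmt3 {V : Type*} [Fintype V] (G : SimpleGraph V) :
    IsEmpty (paw ↪g G) ↔
      ∀ c : G.ConnectedComponent,
        (G.induce c.supp).CliqueFree 3 ∨ IsCompleteMultipartite (G.induce c.supp) := by
  classical
  constructor
  · intro H c
    by_cases hcf : (G.induce c.supp).CliqueFree 3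
    · exact Or.inl hcf
    right
    rw [SimpleGraph.CliqueFree] at hcf
    push_neg at hcf
    obtain ⟨s, hs⟩ := hcf
    rw [SimpleGraph.is3Clique_iff] at hs
    obtain ⟨⟨x, hx⟩, y, z, hxy, hxz, hyz, -⟩ := hs
    simp only [SimpleGraph.comap_adj, Function.Embedding.coe_subtype] at hxy hxz hyz
    have hxT : InTri G x := ⟨y, z, hxy, hxz, hyz⟩
    rintro ⟨u, hu⟩ ⟨v, hv⟩ ⟨w, hw⟩ huv hvw huw
    simp only [SimpleGraph.comap_adj, Function.Embedding.coe_subtype] at huv hvw huw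
    rw [SimpleGraph.ConnectedComponent.mem_supp_iff] at hu hv hw hx
    have hru : G.Reachable x u := (SimpleGraph.ConnectedComponent.eq).mp (hx.trans hu.symm)
    have hrv : G.Reachable u v := (SimpleGraph.ConnectedComponent.eq).mp (hu.trans hv.symm)
    have huT : InTri G u := inTri_reachable H hru hxT
    obtain ⟨p⟩ := hrv.symm
    exact lemD H p huT huw huv (fun h => hvw h.symm)
  · intro hcomp
    constructor
    rintro f
    set a := f 0; set b := f 1; set c := f 2; set d := f 3
    have pA : ∀ i j : Fin 4, G.Adj (f i) (f j) ↔ paw.Adj i j := fun i j => f.map_rel_iff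
    have hab : G.Adj a b := (pA 0 1).mpr (by simp [paw, SimpleGraph.fromEdgeSet_adj])
    have hac : G.Adj a c := (pA 0 2).mpr (by simp [paw, SimpleGraph.fromEdgeSet_adj])
    have hbc : G.Adj b c := (pA 1 2).mpr (by simp [paw, SimpleGraph.fromEdgeSet_adj])
    have hcd : G.Adj c d := (pA 2 3).mpr (by simp [paw, SimpleGraph.fromEdgeSet_adj])
    have had : ¬ G.Adj a d := fun h => by
      have := (pA 0 3).mp h; revert this
      simp [paw, SimpleGraph.fromEdgeSet_adj]
    have hbd : ¬ G.Adj b d := fun h => by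
      have := (pA 1 3).mp h; revert this
      simp [paw, SimpleGraph.fromEdgeSet_adj]
    set C := G.connectedComponentMk a with hC
    have ha : a ∈ C.supp := rfl
    have hb : b ∈ C.supp := (SimpleGraph.ConnectedComponent.mem_supp_iff _ _).mpr
      (SimpleGraph.ConnectedComponent.eq.mpr hab.reachable).symm
    have hc : c ∈ C.supp := (SimpleGraph.ConnectedComponent.mem_supp_iff _ _).mpr
      (SimpleGraph.ConnectedComponent.eq.mpr hac.reachable).symm
    have hd : d ∈ C.supp := (SimpleGraph.ConnectedComponent.mem_supp_iff _ _).mpr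
      (SimpleGraph.ConnectedComponent.eq.mpr (hac.reachable.trans hcd.reachable)).symm
    rcases hcomp C with hcf | hmp
    · exact hcf {⟨a, ha⟩, ⟨b, hb⟩, ⟨c, hc⟩}
        (SimpleGraph.is3Clique_iff.mpr ⟨⟨a, ha⟩, ⟨b, hb⟩, ⟨c, hc⟩, by
          simp only [SimpleGraph.comap_adj, Function.Embedding.coe_subtype]
          exact ⟨hab, hac, hbc, trivial⟩⟩)
    · exact hmp ⟨a, ha⟩ ⟨d, hd⟩ ⟨b, hb⟩
        (by simpa using had) (by simpa using fun h => hbd h.symm)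
        (by simpa using hab)
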